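/- Let n ≥ 2, let 0 < t₀ ≤ t₁ ≤ … ≤ tₙ be real numbers, let φ ∈ (0, π/2], and define x_j = t_j·e^{iφ} ∈ ℍ² for 0 ≤ j ≤ n. Then τ(x₀,…,xₙ) ≥ 0. -/

import Mathlib

open UpperHalfPlane Real Filter

/-- The tension of the chain `x 0, x 1, …, x n`:
`τ = Σ_{j=1}^{n−1} d(x_{j−1},x_{j+1}) − Σ_{j=2}^{n−1} d(x_{j−1},x_j) − d(x_0,x_n)`. -/
noncomputable def tension (n : ℕ) (x : ℕ → UpperHalfPlane) : ℝ :=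
  (∑ j ∈ Finset.range (n - 1), dist (x j) (x (j + 2)))
    - (∑ j ∈ Finset.range (n - 2), dist (x (j + 1)) (x (j + 2)))
    - dist (x 0) (x n)

/-- The Gromov product `⟨x,y⟩_z = (d(x,z)+d(z,y)−d(x,y))/2`. -/
noncomputable def gromov (x y z : UpperHalfPlane) : ℝ :=
  (dist x z + dist z y - dist x y) / 2

/-- A pair `(a,b)` is good if `a, b ≥ 0` and `sinh(a−b) > 2·sinh(a/2)`. -/
def GoodPair (a b : ℝ) : Prop :=
  0 ≤ a ∧ 0 ≤ b ∧ Real.sinh (a - b) > 2 * Real.sinh (a / 2)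

/-- The chain `x 0, …, x n` is `(a,b)`-good. -/
def GoodChain (a b : ℝ) (n : ℕ) (x : ℕ → UpperHalfPlane) : Prop :=
  (∀ j < n, dist (x (j + 1)) (x j) ≥ a) ∧
  (∀ j, 1 ≤ j → j + 1 ≤ n → gromov (x (j - 1)) (x (j + 1)) (x j) ≤ b)

noncomputable def Fc (c u : ℝ) : ℝ := 2 * Real.arsinh (Real.sinh (u / 2) / c)

lemma hasDerivAt_Fc {c : ℝ} (hc : 0 < c) (u : ℝ) :
    HasDerivAt (Fc c) (Real.cosh (u / 2) / Real.sqrt (c ^ 2 + Real.sinh (u / 2) ^ 2)) u := by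
  have h0 : HasDerivAt (fun v : ℝ => v / 2) (1 / 2) u := (hasDerivAt_id u).div_const 2
  have h1 : HasDerivAt (fun v : ℝ => Real.sinh (v / 2) / c)
      (Real.cosh (u / 2) * (1 / 2) / c) u :=
    (h0.sinh).div_const c
  have h2 := (h1.arsinh).const_mul 2
  refine h2.congr_deriv ?_
  have hs : Real.sqrt (1 + (Real.sinh (u / 2) / c) ^ 2)
      = Real.sqrt (c ^ 2 + Real.sinh (u / 2) ^ 2) / c := by
    rw [show (1 : ℝ) + (Real.sinh (u / 2) / c) ^ 2
        = (c ^ 2 + Real.sinh (u / 2) ^ 2) / c ^ 2 by field_simp,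
      Real.sqrt_div' _ (by positivity), Real.sqrt_sq hc.le]
  rw [hs, smul_eq_mul]
  have hpos : 0 < Real.sqrt (c ^ 2 + Real.sinh (u / 2) ^ 2) := by positivity
  field_simp

lemma derivFc_anti {c : ℝ} (hc : 0 < c) (hc1 : c ≤ 1) :
    AntitoneOn (fun u => Real.cosh (u / 2) / Real.sqrt (c ^ 2 + Real.sinh (u / 2) ^ 2))
      (Set.Ici (0 : ℝ)) := by
  intro u hu v hv huv
  simp only [Set.mem_Ici] at hu hv
  set s := Real.sinh (u / 2) with hs
  set tt := Real.sinh (v / 2) with htt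
  have hst : s ≤ tt := Real.sinh_le_sinh.2 (by linarith)
  have hs0 : 0 ≤ s := by
    rw [hs]
    have := Real.sinh_le_sinh.mpr (by linarith : (0:ℝ) ≤ u / 2)
    simpa using this
  have hd1 : (0:ℝ) < Real.sqrt (c ^ 2 + s ^ 2) := by positivity
  have hd2 : (0:ℝ) < Real.sqrt (c ^ 2 + tt ^ 2) := by positivity
  rw [div_le_div_iff₀ hd2 hd1]
  have key : (Real.cosh (v / 2) * Real.sqrt (c ^ 2 + s ^ 2)) ^ 2
      ≤ (Real.cosh (u / 2) * Real.sqrt (c ^ 2 + tt ^ 2)) ^ 2 := by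
    rw [mul_pow, mul_pow, Real.sq_sqrt (by positivity), Real.sq_sqrt (by positivity),
      Real.cosh_sq, Real.cosh_sq]
    have htt0 : 0 ≤ tt := le_trans hs0 hst
    have hsq : s ^ 2 ≤ tt ^ 2 := by nlinarith
    nlinarith [mul_nonneg (sub_nonneg.2 hc1) (sub_nonneg.2 hsq)]
  have hA : 0 ≤ Real.cosh (v / 2) * Real.sqrt (c ^ 2 + s ^ 2) := by positivity
  have hB : 0 ≤ Real.cosh (u / 2) * Real.sqrt (c ^ 2 + tt ^ 2) := by positivity
  nlinarith [key, hA, hB]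

lemma Fc_key {c : ℝ} (hc : 0 < c) (hc1 : c ≤ 1) {k : ℝ} (hk : 0 ≤ k) :
    AntitoneOn (fun u => Fc c (u + k) - Fc c u) (Set.Ici (0 : ℝ)) := by
  have hder : ∀ u : ℝ, HasDerivAt (fun u => Fc c (u + k) - Fc c u)
      (Real.cosh ((u + k) / 2) / Real.sqrt (c ^ 2 + Real.sinh ((u + k) / 2) ^ 2)
        - Real.cosh (u / 2) / Real.sqrt (c ^ 2 + Real.sinh (u / 2) ^ 2)) u := by
    intro u
    have h1 : HasDerivAt (fun u : ℝ => Fc c (u + k))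
        (Real.cosh ((u + k) / 2) / Real.sqrt (c ^ 2 + Real.sinh ((u + k) / 2) ^ 2)) u := by
      have := (hasDerivAt_Fc hc (u + k)).comp u ((hasDerivAt_id u).add_const k)
      exact this.congr_deriv (mul_one _)
    exact h1.sub (hasDerivAt_Fc hc u)
  apply antitoneOn_of_deriv_nonpos (convex_Ici 0)
  · exact fun u _ => ((hder u).continuousAt).continuousWithinAt
  · exact fun u _ => ((hder u).differentiableAt).differentiableWithinAt
  · intro u hu
    rw [interior_Ici] at hu
    have hu0 : 0 < u := Set.mem_Ioi.1 hu
    rw [(hder u).deriv]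
    have := derivFc_anti hc hc1 (Set.mem_Ici.2 (le_of_lt hu0))
      (Set.mem_Ici.2 (by linarith : (0:ℝ) ≤ u + k)) (by linarith)
    simpa [sub_nonpos] using this

lemma u_mono {m : ℕ} {u : ℕ → ℝ} (h : ∀ j < m, u j ≤ u (j + 1)) :
    ∀ i j, i ≤ j → j ≤ m → u i ≤ u j := by
  intro i j hij hjm
  induction j with
  | zero => simp_all
  | succ j ih =>
    rcases Nat.eq_or_lt_of_le hij with rfl | hlt
    · exact le_rfl
    · exact le_trans (ih (Nat.lt_succ_iff.1 hlt) (by omega)) (h j (by omega))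

lemma sumF_nonneg {c : ℝ} (hc : 0 < c) (hc1 : c ≤ 1) :
    ∀ n, 2 ≤ n → ∀ u : ℕ → ℝ, (∀ j < n, u j ≤ u (j + 1)) →
    0 ≤ (∑ j ∈ Finset.range (n - 1), Fc c (u (j + 2) - u j))
        - (∑ j ∈ Finset.range (n - 2), Fc c (u (j + 2) - u (j + 1)))
        - Fc c (u n - u 0) := by
  intro n hn
  induction n, hn using Nat.le_induction with
  | base =>
    intro u hmono
    norm_num
  | succ n hn ih =>
    intro u hmono
    have ihn := ih u (fun j hj => hmono j (by omega))
    have hmono' := u_mono hmono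
    have h1 : n + 1 - 1 = (n - 1) + 1 := by omega
    have h2 : n + 1 - 2 = (n - 2) + 1 := by omega
    rw [h1, h2, Finset.sum_range_succ, Finset.sum_range_succ]
    have e1 : n - 1 + 2 = n + 1 := by omega
    have e2 : n - 2 + 2 = n := by omega
    have e3 : n - 2 + 1 = n - 1 := by omega
    rw [e1, e2, e3]
    -- key inequality
    have hk : 0 ≤ u (n + 1) - u n := sub_nonneg.2 (hmono n (by omega))
    have hp : (0:ℝ) ≤ u n - u (n - 1) :=
      sub_nonneg.2 (hmono' (n - 1) n (by omega) (by omega))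
    have hq : (0:ℝ) ≤ u n - u 0 := sub_nonneg.2 (hmono' 0 n (by omega) (by omega))
    have hpq : u n - u (n - 1) ≤ u n - u 0 := by
      have := hmono' 0 (n - 1) (by omega) (by omega)
      linarith
    have hkey := Fc_key hc hc1 hk (Set.mem_Ici.2 hp) (Set.mem_Ici.2 hq) hpq
    simp only at hkey
    have ea : u n - u (n - 1) + (u (n + 1) - u n) = u (n + 1) - u (n - 1) := by ring
    have eb : u n - u 0 + (u (n + 1) - u n) = u (n + 1) - u 0 := by ring
    rw [ea, eb] at hkey
    linarith

lemma dist_ray {a b φ : ℝ} (ha : 0 < a) (hab : a ≤ b) (hφ1 : 0 < φ) (hφ2 : φ ≤ π / 2)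
    (z w : UpperHalfPlane) (hz : (z : ℂ) = (a : ℂ) * Complex.exp (φ * Complex.I))
    (hw : (w : ℂ) = (b : ℂ) * Complex.exp (φ * Complex.I)) :
    dist z w = Fc (Real.sin φ) (Real.log b - Real.log a) := by
  have hb : 0 < b := lt_of_lt_of_le ha hab
  have hsin : 0 < Real.sin φ := Real.sin_pos_of_pos_of_lt_pi hφ1
    (lt_of_le_of_lt hφ2 (by linarith [Real.pi_pos]))
  have him : ∀ (r : ℝ), ((r : ℂ) * Complex.exp (φ * Complex.I)).im = r * Real.sin φ := by
    intro r
    rw [Complex.mul_im]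
    simp [Complex.exp_ofReal_mul_I_im, Complex.exp_ofReal_mul_I_re]
  have hzim : z.im = a * Real.sin φ := by
    rw [← UpperHalfPlane.coe_im, hz, him]
  have hwim : w.im = b * Real.sin φ := by
    rw [← UpperHalfPlane.coe_im, hw, him]
  have hdist : dist (z : ℂ) (w : ℂ) = b - a := by
    rw [Complex.dist_eq, hz, hw, ← sub_mul]
    rw [norm_mul, Complex.norm_exp]
    have hre : ((φ : ℂ) * Complex.I).re = 0 := by simp
    rw [hre, Real.exp_zero, mul_one]
    rw [show ((a : ℂ) - (b : ℂ)) = ((a - b : ℝ) : ℂ) by push_cast; ring]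
    rw [Complex.norm_real, Real.norm_eq_abs, abs_of_nonpos (by linarith)]
    ring
  rw [UpperHalfPlane.dist_eq, hdist, hzim, hwim, Fc]
  have hsq : Real.sqrt (a * Real.sin φ * (b * Real.sin φ))
      = Real.sqrt (a * b) * Real.sin φ := by
    rw [show a * Real.sin φ * (b * Real.sin φ) = (a * b) * (Real.sin φ) ^ 2 by ring,
      Real.sqrt_mul (by positivity), Real.sqrt_sq hsin.le]
  have hsinh : Real.sinh ((Real.log b - Real.log a) / 2)
      = (b - a) / (2 * Real.sqrt (a * b)) := by
    rw [Real.sinh_eq]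
    rw [show (Real.log b - Real.log a) / 2 = Real.log b / 2 - Real.log a / 2 by ring]
    rw [Real.exp_sub, neg_sub, Real.exp_sub, Real.exp_half, Real.exp_half,
      Real.exp_log ha, Real.exp_log hb]
    have hsa : 0 < Real.sqrt a := Real.sqrt_pos.2 ha
    have hsb : 0 < Real.sqrt b := Real.sqrt_pos.2 hb
    rw [Real.sqrt_mul ha.le, div_sub_div _ _ hsa.ne' hsb.ne', Real.mul_self_sqrt hb.le,
      Real.mul_self_sqrt ha.le]
    ring
  have harg : (b - a) / (2 * Real.sqrt (a * Real.sin φ * (b * Real.sin φ)))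
      = Real.sinh ((Real.log b - Real.log a) / 2) / Real.sin φ := by
    rw [hsq, hsinh, div_div]
    ring_nf
  rw [harg]

/-- Chains lying on the ray of angle `φ` (a convex chain) have non-negative tension. -/
theorem tension_nonneg_of_ray (n : ℕ) (hn : 2 ≤ n) (t : ℕ → ℝ) (ht0 : 0 < t 0)
    (hmono : ∀ j < n, t j ≤ t (j + 1))
    (φ : ℝ) (hφ1 : 0 < φ) (hφ2 : φ ≤ π / 2)
    (x : ℕ → UpperHalfPlane)
    (hx : ∀ j ≤ n, ((x j : ℂ)) = ((t j : ℝ) : ℂ) * Complex.exp (φ * Complex.I)) :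
    0 ≤ tension n x := by
  have hsin : 0 < Real.sin φ := Real.sin_pos_of_pos_of_lt_pi hφ1
    (lt_of_le_of_lt hφ2 (by linarith [Real.pi_pos]))
  have hsin1 : Real.sin φ ≤ 1 := Real.sin_le_one φ
  have htpos : ∀ j ≤ n, 0 < t j := by
    intro j hj
    induction j with
    | zero => exact ht0
    | succ j ih =>
      exact lt_of_lt_of_le (ih (by omega)) (hmono j (by omega))
  have htmono := u_mono hmono
  set u : ℕ → ℝ := fun j => Real.log (t j) with hu
  have hdist : ∀ i j, i ≤ j → j ≤ n → dist (x i) (x j) = Fc (Real.sin φ) (u j - u i) := by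
    intro i j hij hjn
    exact dist_ray (htpos i (by omega)) (htmono i j hij hjn) hφ1 hφ2 _ _
      (hx i (by omega)) (hx j hjn)
  have humono : ∀ j < n, u j ≤ u (j + 1) := by
    intro j hj
    exact Real.log_le_log (htpos j (by omega)) (hmono j hj)
  have hT := sumF_nonneg hsin hsin1 n hn u humono
  have e1 : ∑ j ∈ Finset.range (n - 1), dist (x j) (x (j + 2))
      = ∑ j ∈ Finset.range (n - 1), Fc (Real.sin φ) (u (j + 2) - u j) :=
    Finset.sum_congr rfl (fun j hj =>
      hdist j (j + 2) (by omega) (by have := Finset.mem_range.1 hj; omega))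
  have e2 : ∑ j ∈ Finset.range (n - 2), dist (x (j + 1)) (x (j + 2))
      = ∑ j ∈ Finset.range (n - 2), Fc (Real.sin φ) (u (j + 2) - u (j + 1)) :=
    Finset.sum_congr rfl (fun j hj =>
      hdist (j + 1) (j + 2) (by omega) (by have := Finset.mem_range.1 hj; omega))
  rw [tension, e1, e2, hdist 0 n (by omega) le_rfl]
  exact hT
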